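/- Let M be a finite metric space with n points, viewed as a weighted complete graph with edge weights d(u,v). An edge uv is essential if d(u,v) < d(u,w) + d(w,v) for all w distinct from u, v. If the set of essential edges of M has exactly n-1 elements, and the essential edges connect M, then the essential edges form a spanning tree of M and the metric d coincides with the shortest-weighted-path metric of this tree. -/

import Mathlib

/-- The graph of essential edges of a metric space: `u v` are adjacent iff `u ≠ v` and
`d(u,v) < d(u,w) + d(w,v)` for every `w` distinct from `u` and `v`. -/
def essentialGraph (M : Type*) [MetricSpace M] : SimpleGraph M where
  Adj u v := u ≠ v ∧ ∀ w, w ≠ u → w ≠ v → dist u v < dist u w + dist w v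
  symm := by
    constructor
    intro u v h
    obtain ⟨huv, hw⟩ := h
    refine ⟨huv.symm, fun w hwv hwu => ?_⟩
    have h1 := hw w hwu hwv
    rw [dist_comm v u, dist_comm v w, dist_comm w u]
    linarith
  loopless := by constructor; intro v h; exact h.1 rfl

/-- Total weight of a walk in the essential graph: the sum of the distances between the
endpoints of its darts. -/
noncomputable def walkWeight {M : Type*} [MetricSpace M] {u v : M}
    (p : (essentialGraph M).Walk u v) : ℝ :=
  (p.darts.map fun d => dist d.toProd.1 d.toProd.2).sum

open SimpleGraph

lemma card_le_ncard_edgeSet_add_one {V : Type*} [Fintype V] {G : SimpleGraph V}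
    (h : G.Connected) : Fintype.card V ≤ G.edgeSet.ncard + 1 := by
  classical
  obtain ⟨root⟩ := h.nonempty
  have key : ∀ v : V, v ≠ root → ∃ p : V, G.Adj p v ∧ G.dist root p + 1 = G.dist root v := by
    intro v hv
    obtain ⟨w, hw⟩ := h.exists_walk_length_eq_dist root v
    have hw' : w.reverse.length = G.dist root v := by simpa using hw
    cases hrev : w.reverse with
    | nil => exact absurd rfl hv
    | cons hadj q =>
        rename_i x
        refine ⟨x, hadj.symm, ?_⟩
        rw [hrev] at hw'
        simp only [Walk.length_cons] at hw'
        have h1 : G.dist root x ≤ q.length := by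
          have := G.dist_le q.reverse
          simpa [SimpleGraph.dist_comm] using this
        have h2 : G.dist root v ≤ G.dist root x + 1 := by
          have : G.dist x v ≤ 1 := by
            have := G.dist_le (Walk.cons hadj.symm Walk.nil)
            simpa using this
          have := h.dist_triangle (u := root) (v := x) (w := v)
          omega
        omega
  choose par hpar hdist using key
  have hinj : Function.Injective
      (fun v : {v : V // v ≠ root} => (⟨s(par v v.2, v), G.mem_edgeSet.2 (hpar v v.2)⟩ :
        G.edgeSet)) := by
    rintro ⟨a, ha⟩ ⟨b, hb⟩ hab
    simp only [Subtype.mk.injEq, Sym2.eq_iff] at hab ⊢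
    rcases hab with ⟨-, h2⟩ | ⟨h1, h2⟩
    · exact h2
    · have da := hdist a ha
      have db := hdist b hb
      rw [h1] at da; rw [← h2] at db
      omega
  have hle := Nat.card_le_card_of_injective _ hinj
  rw [Nat.card_coe_set_eq] at hle
  have hL : Nat.card {v : V // v ≠ root} = Fintype.card V - 1 := by
    rw [Nat.card_eq_fintype_card, Fintype.card_subtype_compl, Fintype.card_subtype_eq]
  have hpos : 0 < Fintype.card V := Fintype.card_pos_iff.mpr ⟨root⟩
  omega

@[simp] lemma walkWeight_nil {M : Type*} [MetricSpace M] {u : M} :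
    walkWeight (Walk.nil : (essentialGraph M).Walk u u) = 0 := rfl

@[simp] lemma walkWeight_cons {M : Type*} [MetricSpace M] {u x v : M}
    (h : (essentialGraph M).Adj u x) (p : (essentialGraph M).Walk x v) :
    walkWeight (Walk.cons h p) = dist u x + walkWeight p := rfl

lemma walkWeight_append {M : Type*} [MetricSpace M] {u x v : M}
    (p : (essentialGraph M).Walk u x) (q : (essentialGraph M).Walk x v) :
    walkWeight (p.append q) = walkWeight p + walkWeight q := by
  simp [walkWeight, Walk.darts_append]

lemma dist_le_walkWeight {M : Type*} [MetricSpace M] {u v : M}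
    (p : (essentialGraph M).Walk u v) : dist u v ≤ walkWeight p := by
  induction p with
  | nil => simp
  | cons h q ih =>
      rename_i a b c
      rw [walkWeight_cons]
      calc dist a c ≤ dist a b + dist b c := dist_triangle a b c
        _ ≤ dist a b + walkWeight q := by linarith

lemma exists_walk_weight_eq {M : Type*} [MetricSpace M] [Fintype M] (u v : M) :
    ∃ p : (essentialGraph M).Walk u v, walkWeight p = dist u v := by
  classical
  suffices H : ∀ (n : ℕ) (u v : M),
      (Finset.univ.filter (fun q : M × M => dist q.1 q.2 < dist u v)).card ≤ n →
      ∃ p : (essentialGraph M).Walk u v, walkWeight p = dist u v from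
    H _ u v le_rfl
  intro n
  induction n with
  | zero =>
      intro u v hn
      -- the filter is empty; in particular (u, u) is not in it unless dist u u < dist u v,
      -- i.e. 0 < dist u v. So dist u v ≤ 0, hence u = v.
      have huv : u = v := by
        by_contra hne
        have hpos : (0:ℝ) < dist u v := dist_pos.mpr hne
        have : (u, u) ∈ Finset.univ.filter (fun q : M × M => dist q.1 q.2 < dist u v) := by
          simp [hpos]
        have := Finset.card_pos.mpr ⟨_, this⟩
        omega
      subst huv
      exact ⟨Walk.nil, by simp⟩
  | succ n ih =>
      intro u v hn
      by_cases hne : u = v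
      · subst hne; exact ⟨Walk.nil, by simp⟩
      by_cases hadj : (essentialGraph M).Adj u v
      · exact ⟨Walk.cons hadj Walk.nil, by simp⟩
      · -- not essential: there is w with dist u w + dist w v ≤ dist u v
        simp only [essentialGraph, ne_eq] at hadj
        rw [not_and_or] at hadj
        rcases hadj with h | h
        · exact absurd (not_not.mp h) hne
        push_neg at h
        obtain ⟨w, hwu, hwv, hle⟩ := h
        have heq : dist u w + dist w v = dist u v :=
          le_antisymm hle (dist_triangle u w v)
        have h1 : dist u w < dist u v := by
          have : (0:ℝ) < dist w v := dist_pos.mpr hwv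
          linarith
        have h2 : dist w v < dist u v := by
          have : (0:ℝ) < dist u w := dist_pos.mpr (Ne.symm hwu)
          linarith
        have hsub : ∀ a b : M, dist a b < dist u v →
            (Finset.univ.filter (fun q : M × M => dist q.1 q.2 < dist a b)).card ≤ n := by
          intro a b hab
          have hss : Finset.univ.filter (fun q : M × M => dist q.1 q.2 < dist a b) ⊆
              Finset.univ.filter (fun q : M × M => dist q.1 q.2 < dist u v) := by
            intro q hq
            simp only [Finset.mem_filter] at hq ⊢
            exact ⟨hq.1, lt_trans hq.2 hab⟩
          have hmem : (a, b) ∈ Finset.univ.filter (fun q : M × M => dist q.1 q.2 < dist u v) :=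
            by simp [hab]
          have hnmem : (a, b) ∉ Finset.univ.filter (fun q : M × M => dist q.1 q.2 < dist a b) :=
            by simp
          have := Finset.card_lt_card (Finset.ssubset_iff_of_subset hss |>.mpr ⟨_, hmem, hnmem⟩)
          omega
        obtain ⟨p₁, hp₁⟩ := ih u w (hsub u w h1)
        obtain ⟨p₂, hp₂⟩ := ih w v (hsub w v h2)
        exact ⟨p₁.append p₂, by rw [walkWeight_append, hp₁, hp₂, heq]⟩


/-- If the set of essential edges of a finite metric space `M` with `n` points has
exactly `n - 1` elements, and the essential edges connect `M`, then the essential edges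
form a (spanning) tree, and the metric coincides with the shortest-weighted-path metric
of this tree: for all `u, v`, the distance `d(u,v)` is the least total weight of a walk
in the essential graph joining `u` to `v`. -/
theorem essential_edges_tree (M : Type*) [MetricSpace M] [Fintype M]
    (hconn : (essentialGraph M).Connected)
    (hcard : (essentialGraph M).edgeSet.ncard = Fintype.card M - 1) :
    (essentialGraph M).IsTree ∧
    ∀ u v : M,
      IsLeast {c : ℝ | ∃ p : (essentialGraph M).Walk u v, walkWeight p = c}
        (dist u v) := by
  classical
  constructor
  · refine ⟨hconn, ?_⟩
    rw [isAcyclic_iff_forall_adj_isBridge]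
    intro v w hvw
    by_contra hbr
    rw [isBridge_iff] at hbr
    push_neg at hbr
    have hreach : ((essentialGraph M) \ fromEdgeSet {s(v, w)}).Reachable v w := hbr
    set G' := (essentialGraph M) \ fromEdgeSet {s(v, w)} with hG'
    have step : ∀ a b : M, (essentialGraph M).Adj a b → G'.Reachable a b := by
      intro a b hab
      by_cases he : s(a, b) = s(v, w)
      · rw [Sym2.eq_iff] at he
        rcases he with ⟨rfl, rfl⟩ | ⟨rfl, rfl⟩
        · exact hreach
        · exact hreach.symm
      · exact SimpleGraph.Adj.reachable (by
          rw [hG', sdiff_adj, fromEdgeSet_adj]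
          exact ⟨hab, by simp [he]⟩)
    have hconn' : G'.Connected := by
      have hne : Nonempty M := hconn.nonempty
      refine ⟨fun a b => ?_⟩
      obtain ⟨p⟩ := hconn.preconnected a b
      induction p with
      | nil => rfl
      | cons h q ihq => exact (step _ _ h).trans ihq
    have hle := card_le_ncard_edgeSet_add_one hconn'
    have hE : G'.edgeSet = (essentialGraph M).edgeSet \ {s(v, w)} := by
      have hnd : ¬ (s(v, w)).IsDiag := by simp [hvw.ne]
      have hsing : ({s(v, w)} : Set (Sym2 M)) \ {e : Sym2 M | e.IsDiag} = {s(v, w)} := by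
        ext e
        simp only [Set.mem_diff, Set.mem_singleton_iff, Set.mem_setOf_eq]
        exact ⟨fun h => h.1, fun h => ⟨h, h ▸ hnd⟩⟩
      rw [hG', edgeSet_sdiff, edgeSet_fromEdgeSet, show Sym2.diagSet = {e : Sym2 M | e.IsDiag} from rfl, hsing]
    have hmem : s(v, w) ∈ (essentialGraph M).edgeSet := hvw
    have hfin : (essentialGraph M).edgeSet.Finite := Set.toFinite _
    have hE' : G'.edgeSet.ncard = (essentialGraph M).edgeSet.ncard - 1 := by
      rw [hE, Set.ncard_diff_singleton_of_mem hmem]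
    have h2 : 2 ≤ Fintype.card M := by
      have : v ≠ w := hvw.ne
      exact Fintype.one_lt_card_iff.mpr ⟨v, w, this⟩
    omega
  · intro u v
    refine ⟨exists_walk_weight_eq u v, ?_⟩
    rintro c ⟨p, rfl⟩
    exact dist_le_walkWeight p
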